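/- Let k ≥ 2, τ > 1, j ∈ ℤ, and μ the truncated exponential on [0, τ^{-j-1}] with density (k τ^{j+1} log k)/(k−1) exp(−r τ^{j+1} log k). Let c = (1 − 1/log k) τ^{-j-1}. Then for every R ∈ [0, c) and d ≥ 0, the conditional probability μ([R, R+d]) / μ([R, τ^{-j-1}]) is at most 2 d τ^{j+1} log k. -/

import Mathlib

lemma aux_exp_int (C L a b : ℝ) (hab : a ≤ b) (hL : 0 < L) :
    ∫ r in Set.Icc a b, C * Real.exp (-(r * L))
      = C * ((Real.exp (-(a * L)) - Real.exp (-(b * L))) / L) := by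
  rw [MeasureTheory.integral_Icc_eq_integral_Ioc, ← intervalIntegral.integral_of_le hab,
    intervalIntegral.integral_const_mul]
  congr 1
  have key : ∀ r ∈ Set.uIcc a b,
      HasDerivAt (fun x => -(Real.exp (-(x * L)) / L)) (Real.exp (-(r * L))) r := by
    intro r _
    have h1 : HasDerivAt (fun x : ℝ => -(x * L)) (-L) r := by
      simpa using ((hasDerivAt_id r).mul_const L).fun_neg
    have h2 := ((h1.exp).div_const L).fun_neg
    convert h2 using 1
    · rfl
    · rfl
    field_simp
  rw [intervalIntegral.integral_eq_sub_of_hasDerivAt key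
    ((Real.continuous_exp.comp (by continuity)).intervalIntegrable a b)]
  ring

set_option maxHeartbeats 1000000 in
theorem stmt_12 (k : ℕ) (hk : 2 ≤ k) (τ : ℝ) (hτ : 1 < τ) (j : ℤ)
    (c R d : ℝ) (hc : c = (1 - 1 / Real.log k) * τ ^ (-(j + 1)))
    (hR : R ∈ Set.Ico (0 : ℝ) c) (hd : 0 ≤ d) :
    (∫ r in Set.Icc R (R + d) ∩ Set.Icc 0 (τ ^ (-(j + 1))),
        (k * τ ^ (j + 1) * Real.log k / (k - 1)) * Real.exp (-(r * τ ^ (j + 1) * Real.log k))) /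
      (∫ r in Set.Icc R (τ ^ (-(j + 1))),
        (k * τ ^ (j + 1) * Real.log k / (k - 1)) * Real.exp (-(r * τ ^ (j + 1) * Real.log k)))
      ≤ 2 * d * τ ^ (j + 1) * Real.log k := by
  obtain ⟨hR0, hRc⟩ := hR
  have hk2 : (2 : ℝ) ≤ (k : ℝ) := by exact_mod_cast hk
  have hk1 : (1 : ℝ) < (k : ℝ) := by linarith
  have hlog0 : 0 < Real.log k := Real.log_pos hk1
  have hP : (0 : ℝ) < τ ^ (j + 1) := zpow_pos (by linarith) _
  have hT : (0 : ℝ) < τ ^ (-(j + 1)) := zpow_pos (by linarith) _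
  set T : ℝ := τ ^ (-(j + 1)) with hTdef
  set L : ℝ := τ ^ (j + 1) * Real.log k with hLdef
  have hL : 0 < L := mul_pos hP hlog0
  have hτ0 : τ ≠ 0 := by linarith
  have hTP : T * τ ^ (j + 1) = 1 := by
    rw [hTdef, ← zpow_add₀ hτ0, show -(j + 1) + (j + 1) = 0 from by ring, zpow_zero]
  have hTL : T * L = Real.log k := by
    rw [hLdef, ← mul_assoc, hTP, one_mul]
  -- log k > 1
  have hc0 : 0 < c := lt_of_le_of_lt hR0 hRc
  have hlog1 : 1 < Real.log k := by
    by_contra h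
    push_neg at h
    have : 1 - 1 / Real.log k ≤ 0 := by
      have : 1 ≤ 1 / Real.log k := by rw [le_div_iff₀ hlog0]; linarith
      linarith
    nlinarith [hc0, hc, hT]
  have hcT : c < T := by
    rw [hc]
    have : 1 - 1 / Real.log k < 1 := by
      have : 0 < 1 / Real.log k := by positivity
      linarith
    nlinarith
  have hRT : R ≤ T := le_of_lt (lt_trans hRc hcT)
  set C : ℝ := k * τ ^ (j + 1) * Real.log k / (k - 1) with hCdef
  have hC : 0 < C := by
    apply div_pos (by positivity) (by linarith)
  -- rewrite integrands
  have hsimp : ∀ s : Set ℝ, (∫ r in s, (↑k * τ ^ (j + 1) * Real.log ↑k / (↑k - 1)) *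
      Real.exp (-(r * τ ^ (j + 1) * Real.log ↑k))) = ∫ r in s, C * Real.exp (-(r * L)) := by
    intro s
    simp only [hCdef, hLdef, mul_assoc]
  rw [hsimp, hsimp]
  -- denominator
  have hD : (∫ r in Set.Icc R T, C * Real.exp (-(r * L)))
      = C * ((Real.exp (-(R * L)) - Real.exp (-(T * L))) / L) := aux_exp_int C L R T hRT hL
  have hRLTL : R * L < T * L := by
    exact mul_lt_mul_of_pos_right (lt_trans hRc hcT) hL
  have hEgt : Real.exp (-(T * L)) < Real.exp (-(R * L)) := Real.exp_lt_exp.mpr (by linarith)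
  have hDpos : 0 < ∫ r in Set.Icc R T, C * Real.exp (-(r * L)) := by
    rw [hD]
    apply mul_pos hC (div_pos (by linarith) hL)
  -- numerator bound
  have hint : MeasureTheory.IntegrableOn (fun r => C * Real.exp (-(r * L)))
      (Set.Icc R (R + d)) MeasureTheory.volume := by
    exact (Continuous.integrableOn_Icc (by fun_prop))
  have hN : (∫ r in Set.Icc R (R + d) ∩ Set.Icc 0 T, C * Real.exp (-(r * L)))
      ≤ ∫ r in Set.Icc R (R + d), C * Real.exp (-(r * L)) := by
    apply MeasureTheory.setIntegral_mono_set hint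
    · filter_upwards with r using by positivity
    · exact Filter.Eventually.of_forall (fun x hx => hx.1)
  have hN2 : (∫ r in Set.Icc R (R + d), C * Real.exp (-(r * L)))
      = C * ((Real.exp (-(R * L)) - Real.exp (-((R + d) * L))) / L) :=
    aux_exp_int C L R (R + d) (by linarith) hL
  rw [div_le_iff₀ hDpos, hD]
  refine le_trans hN ?_
  rw [hN2]
  -- key inequality
  have hexpadd : Real.exp (-((R + d) * L)) = Real.exp (-(R * L)) * Real.exp (-(d * L)) := by
    rw [← Real.exp_add]; ring_nf
  have hgoalL : (2 : ℝ) * d * τ ^ (j + 1) * Real.log k = 2 * d * L := by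
    rw [hLdef]; ring
  rw [hgoalL, hexpadd]
  set ER := Real.exp (-(R * L)) with hER
  set Ed := Real.exp (-(d * L)) with hEd
  have hEd1 : Ed ≤ 1 := Real.exp_le_one_iff.mpr (by nlinarith)
  have hEdge : 1 - d * L ≤ Ed := by
    have := Real.add_one_le_exp (-(d * L))
    linarith
  have hET : Real.exp (-(T * L)) = 1 / k := by
    rw [hTL, Real.exp_neg, Real.exp_log (by linarith)]
    exact (one_div _).symm
  have hcL : c * L = Real.log k - 1 := by
    rw [hc]
    have : (1 - 1 / Real.log k) * T * L = (1 - 1 / Real.log k) * (T * L) := by ring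
    rw [this, hTL]
    field_simp
  have hER2 : 2 * Real.exp (-(T * L)) ≤ ER := by
    have h1 : Real.exp (-(c * L)) ≤ ER := by
      apply Real.exp_le_exp.mpr
      have := mul_le_mul_of_nonneg_right (le_of_lt hRc) (le_of_lt hL)
      linarith
    have h2 : Real.exp (-(c * L)) = Real.exp 1 * (1 / k) := by
      rw [hcL, show -(Real.log k - 1) = 1 + -Real.log k from by ring, Real.exp_add,
        Real.exp_neg, Real.exp_log (by linarith), one_div]
    have he : (2 : ℝ) ≤ Real.exp 1 := by
      have := Real.add_one_le_exp (1 : ℝ)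
      linarith
    rw [hET]
    have hkpos : 0 < (1 : ℝ) / k := by positivity
    have := mul_le_mul_of_nonneg_right he hkpos.le
    linarith
  have hERpos : 0 < ER := Real.exp_pos _
  rw [mul_comm (2 * d * L)]
  -- reduce to polynomial inequality
  clear hsimp hD hN2 hDpos hN hint
  clear_value T L C ER Ed
  have key : ER - ER * Ed ≤ (2 * d * L) * (ER - Real.exp (-(T * L))) := by
    have h1 := mul_le_mul_of_nonneg_left hEdge hERpos.le
    have h2 : 0 ≤ d * L * (2 * (ER - Real.exp (-(T * L))) - ER) :=
      mul_nonneg (mul_nonneg hd hL.le) (by linarith)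
    nlinarith [h1, h2]
  rw [show C * ((ER - Real.exp (-(T * L))) / L) * (2 * d * L)
      = C * (((2 * d * L) * (ER - Real.exp (-(T * L)))) / L) from by ring]
  exact mul_le_mul_of_nonneg_left ((div_le_div_iff_of_pos_right hL).mpr key) hC.le
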